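/- arXiv:0911.2255 — 3 statements merged into one kernel-verified Lean document; each statement's English description precedes it below -/
import Mathlib

section
/- For a 2×2 quaternionic Hermitian matrix X = ![![p, conj a], ![a, m]] with p, m ∈ ℝ and a ∈ ℍ, the quantity det X := p·m − |a|² equals the Lorentzian norm of the corresponding vector in ℝ^{5+1}; moreover det is invariant under X ↦ M X Mᴴ whenever M is a complex matrix (entries in a fixed complex subalgebra of ℍ) with det M = ±1. -/
open Matrix

abbrev qmk (a b c d : ℝ) : Quaternion ℝ := ⟨a, b, c, d⟩

@[simp] theorem qmk_re (a b c d : ℝ) : (qmk a b c d).re = a := rfl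
@[simp] theorem qmk_imI (a b c d : ℝ) : (qmk a b c d).imI = b := rfl
@[simp] theorem qmk_imJ (a b c d : ℝ) : (qmk a b c d).imJ = c := rfl
@[simp] theorem qmk_imK (a b c d : ℝ) : (qmk a b c d).imK = d := rfl

set_option maxHeartbeats 2000000
theorem quaternionic_det_lorentzian_and_invariant
    (p m : ℝ) (a : Quaternion ℝ)
    (M : Matrix (Fin 2) (Fin 2) (Quaternion ℝ))
    (hM : ∀ i j, M i j ∈ Submodule.span ℝ ({1, ⟨0, 1, 0, 0⟩} : Set (Quaternion ℝ)))
    (hdet : M 0 0 * M 1 1 - M 0 1 * M 1 0 = 1 ∨ M 0 0 * M 1 1 - M 0 1 * M 1 0 = -1) :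
    p * m - ‖a‖ ^ 2 = ((p + m) / 2) ^ 2 - ((p - m) / 2) ^ 2 - ‖a‖ ^ 2 ∧
    (let Y := M * !![(p : Quaternion ℝ), star a; a, (m : Quaternion ℝ)] * Mᴴ
     Y 0 0 * Y 1 1 - star (Y 1 0) * Y 1 0 = ((p * m - ‖a‖ ^ 2 : ℝ) : Quaternion ℝ)) := by
  have rep : ∀ i j, ∃ x y : ℝ, M i j = qmk x y 0 0 := by
    intro i j
    have h : M i j ∈ Submodule.span ℝ ({qmk 1 0 0 0, qmk 0 1 0 0} : Set (Quaternion ℝ)) := hM i j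
    replace h := Submodule.mem_span_pair.mp h
    obtain ⟨x, y, h⟩ := h
    exact ⟨x, y, by rw [← h]; ext <;> simp⟩
  obtain ⟨x00, y00, h00⟩ := rep 0 0
  obtain ⟨x01, y01, h01⟩ := rep 0 1
  obtain ⟨x10, y10, h10⟩ := rep 1 0
  obtain ⟨x11, y11, h11⟩ := rep 1 1
  have hn : ‖a‖ ^ 2 = a.re ^ 2 + a.imI ^ 2 + a.imJ ^ 2 + a.imK ^ 2 := by
    rw [sq, ← Quaternion.normSq_eq_norm_mul_self, Quaternion.normSq_def']
  refine ⟨by rw [hn]; ring, ?_⟩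
  rw [hn]
  obtain ⟨a1, a2, a3, a4, rfl⟩ : ∃ a1 a2 a3 a4 : ℝ, a = qmk a1 a2 a3 a4 := ⟨a.re, a.imI, a.imJ, a.imK, rfl⟩
  simp only [Matrix.mul_apply, Fin.sum_univ_two, Matrix.conjTranspose_apply,
    Matrix.cons_val', Matrix.cons_val_zero, Matrix.cons_val_one, Matrix.head_cons,
    Matrix.empty_val', Matrix.cons_val_fin_one, Matrix.head_fin_const, Matrix.of_apply,
    h00, h01, h10, h11]
  rw [show ((p:ℝ) : Quaternion ℝ) = qmk p 0 0 0 from rfl,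
    show ((m:ℝ) : Quaternion ℝ) = qmk m 0 0 0 from rfl,
    show ((p*m - (a1^2+a2^2+a3^2+a4^2) : ℝ) : Quaternion ℝ)
      = qmk (p*m - (a1^2+a2^2+a3^2+a4^2)) 0 0 0 from rfl]
  rcases hdet with h | h
  · rw [h00, h01, h10, h11, show (1 : Quaternion ℝ) = qmk 1 0 0 0 from rfl] at h
    replace h := Quaternion.ext_iff.mp h
    simp only [Quaternion.re_mul, Quaternion.imI_mul, Quaternion.imJ_mul, Quaternion.imK_mul,
        Quaternion.re_sub, Quaternion.imI_sub, Quaternion.imJ_sub, Quaternion.imK_sub,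
        Quaternion.re_add, Quaternion.imI_add, Quaternion.imJ_add, Quaternion.imK_add,
        Quaternion.re_neg, Quaternion.imI_neg, Quaternion.imJ_neg, Quaternion.imK_neg, QuaternionAlgebra.re_mul, QuaternionAlgebra.imI_mul,
      QuaternionAlgebra.imJ_mul, QuaternionAlgebra.imK_mul, QuaternionAlgebra.re_sub,
      QuaternionAlgebra.imI_sub, QuaternionAlgebra.imJ_sub, QuaternionAlgebra.imK_sub, qmk_re, qmk_imI, qmk_imJ, qmk_imK] at h
    obtain ⟨h1, h2, h3, h4⟩ := h
    apply Quaternion.ext_iff.mpr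
    refine ⟨?_, ?_, ?_, ?_⟩ <;>
      simp only [Quaternion.re_mul, Quaternion.imI_mul, Quaternion.imJ_mul, Quaternion.imK_mul,
        Quaternion.re_sub, Quaternion.imI_sub, Quaternion.imJ_sub, Quaternion.imK_sub,
        Quaternion.re_add, Quaternion.imI_add, Quaternion.imJ_add, Quaternion.imK_add,
        Quaternion.re_neg, Quaternion.imI_neg, Quaternion.imJ_neg, Quaternion.imK_neg, QuaternionAlgebra.re_mul, QuaternionAlgebra.imI_mul,
        QuaternionAlgebra.imJ_mul, QuaternionAlgebra.imK_mul, QuaternionAlgebra.re_sub,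
        QuaternionAlgebra.imI_sub, QuaternionAlgebra.imJ_sub, QuaternionAlgebra.imK_sub,
        QuaternionAlgebra.re_add, QuaternionAlgebra.imI_add, QuaternionAlgebra.imJ_add,
        QuaternionAlgebra.imK_add, Quaternion.re_star, Quaternion.imI_star,
        Quaternion.imJ_star, Quaternion.imK_star, qmk_re, qmk_imI, qmk_imJ, qmk_imK]
    · linear_combination ((p*m - (a1^2+a2^2+a3^2+a4^2)) *
        ((x00*x11 - y00*y11 - x01*x10 + y01*y10) + 1)) * h1 +
        ((p*m - (a1^2+a2^2+a3^2+a4^2)) *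
        (x00*y11 + y00*x11 - x01*y10 - y01*x10)) * h2
    · ring
    · ring
    · ring
  · rw [h00, h01, h10, h11, show (-1 : Quaternion ℝ) = qmk (-1) 0 0 0 by ext <;> simp <;> rfl] at h
    replace h := Quaternion.ext_iff.mp h
    simp only [Quaternion.re_mul, Quaternion.imI_mul, Quaternion.imJ_mul, Quaternion.imK_mul,
        Quaternion.re_sub, Quaternion.imI_sub, Quaternion.imJ_sub, Quaternion.imK_sub,
        Quaternion.re_add, Quaternion.imI_add, Quaternion.imJ_add, Quaternion.imK_add,
        Quaternion.re_neg, Quaternion.imI_neg, Quaternion.imJ_neg, Quaternion.imK_neg, QuaternionAlgebra.re_mul, QuaternionAlgebra.imI_mul,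
      QuaternionAlgebra.imJ_mul, QuaternionAlgebra.imK_mul, QuaternionAlgebra.re_sub,
      QuaternionAlgebra.imI_sub, QuaternionAlgebra.imJ_sub, QuaternionAlgebra.imK_sub, qmk_re, qmk_imI, qmk_imJ, qmk_imK] at h
    obtain ⟨h1, h2, h3, h4⟩ := h
    apply Quaternion.ext_iff.mpr
    refine ⟨?_, ?_, ?_, ?_⟩ <;>
      simp only [Quaternion.re_mul, Quaternion.imI_mul, Quaternion.imJ_mul, Quaternion.imK_mul,
        Quaternion.re_sub, Quaternion.imI_sub, Quaternion.imJ_sub, Quaternion.imK_sub,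
        Quaternion.re_add, Quaternion.imI_add, Quaternion.imJ_add, Quaternion.imK_add,
        Quaternion.re_neg, Quaternion.imI_neg, Quaternion.imJ_neg, Quaternion.imK_neg, QuaternionAlgebra.re_mul, QuaternionAlgebra.imI_mul,
        QuaternionAlgebra.imJ_mul, QuaternionAlgebra.imK_mul, QuaternionAlgebra.re_sub,
        QuaternionAlgebra.imI_sub, QuaternionAlgebra.imJ_sub, QuaternionAlgebra.imK_sub,
        QuaternionAlgebra.re_add, QuaternionAlgebra.imI_add, QuaternionAlgebra.imJ_add,
        QuaternionAlgebra.imK_add, Quaternion.re_star, Quaternion.imI_star,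
        Quaternion.imJ_star, Quaternion.imK_star, qmk_re, qmk_imI, qmk_imJ, qmk_imK]
    · linear_combination ((p*m - (a1^2+a2^2+a3^2+a4^2)) *
        ((x00*x11 - y00*y11 - x01*x10 + y01*y10) - 1)) * h1 +
        ((p*m - (a1^2+a2^2+a3^2+a4^2)) *
        (x00*y11 + y00*x11 - x01*y10 - y01*x10)) * h2
    · ring
    · ring
    · ring
end

section
/- For 3×3 complex Hermitian matrices, define the Freudenthal product X ∗ Y = X∘Y − ½(X·tr(Y) + Y·tr(X)) − ½(tr(X∘Y) − tr(X)tr(Y))·I, where X∘Y = (XY+YX)/2. Then tr((X ∗ X) ∘ X) = 3·det X. -/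
open Matrix

/-- The Jordan product on 3×3 complex matrices. -/
noncomputable def jmul (X Y : Matrix (Fin 3) (Fin 3) ℂ) : Matrix (Fin 3) (Fin 3) ℂ :=
  (1 / 2 : ℂ) • (X * Y + Y * X)

/-- The Freudenthal product on 3×3 complex matrices. -/
noncomputable def freudenthal (X Y : Matrix (Fin 3) (Fin 3) ℂ) : Matrix (Fin 3) (Fin 3) ℂ :=
  jmul X Y - (1 / 2 : ℂ) • (Y.trace • X + X.trace • Y)
    - (1 / 2 : ℂ) • (((jmul X Y).trace - X.trace * Y.trace) • (1 : Matrix (Fin 3) (Fin 3) ℂ))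

theorem trace_triple_eq_three_det
    (X : Matrix (Fin 3) (Fin 3) ℂ) (hX : X.IsHermitian) :
    (jmul (freudenthal X X) X).trace = 3 * X.det := by
  simp only [jmul, freudenthal, Matrix.trace, Matrix.det_fin_three, Matrix.diag,
    Matrix.mul_apply, Matrix.add_apply, Matrix.sub_apply, Matrix.smul_apply,
    Matrix.one_apply, Fin.sum_univ_three, smul_eq_mul]
  norm_num [Fin.ext_iff]
  ring
end

section
/- Let Ψ ∈ ℂ³ and set 𝒫 = Ψ Ψᴴ, a 3×3 complex Hermitian matrix. Then 𝒫 satisfies 𝒫 ∗ 𝒫 = 0, where ∗ is the Freudenthal product X ∗ Y = X∘Y − ½(X tr Y + Y tr X) − ½(tr(X∘Y) − tr X tr Y) I; conversely, a nonzero 3×3 complex Hermitian matrix 𝒫 with 𝒫 ∗ 𝒫 = 0 and tr 𝒫 > 0 is of the form Ψ Ψᴴ for some Ψ ∈ ℂ³. -/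
open Matrix

lemma jmul_self (P : Matrix (Fin 3) (Fin 3) ℂ) : jmul P P = P * P := by
  rw [jmul]; module

lemma rank_one_of_sq (P : Matrix (Fin 3) (Fin 3) ℂ) (hA : P.IsHermitian)
    (h2 : P * P = P.trace • P) (htr : 0 < P.trace.re) :
    ∃ Ψ : Fin 3 → ℂ, P = Matrix.of fun i j => Ψ i * star (Ψ j) := by
  classical
  set U : Matrix (Fin 3) (Fin 3) ℂ := (hA.eigenvectorUnitary : Matrix (Fin 3) (Fin 3) ℂ) with hU
  set d : Fin 3 → ℝ := hA.eigenvalues with hd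
  set D : Matrix (Fin 3) (Fin 3) ℂ := diagonal (fun i => (d i : ℂ)) with hDdef
  have hUU : U * star U = 1 := Matrix.mem_unitaryGroup_iff.mp (hA.eigenvectorUnitary).2
  have hUU' : star U * U = 1 := Matrix.mem_unitaryGroup_iff'.mp (hA.eigenvectorUnitary).2
  have hDiag : star U * P * U = D := by
    have := hA.conjStarAlgAut_star_eigenvectorUnitary
    simp only [Unitary.conjStarAlgAut_star_apply, Unitary.coe_star] at this
    rw [hU, hDdef]; exact this
  have hcancel : ∀ X : Matrix (Fin 3) (Fin 3) ℂ, U * (star U * X) = X := by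
    intro X; rw [← mul_assoc, hUU, one_mul]
  have hspec : P = U * D * star U := by
    rw [← hDiag]
    simp only [mul_assoc, hcancel]
    rw [hUU, mul_one]
  -- trace of P equals sum of eigenvalues
  have htrD : P.trace = D.trace := by
    conv_lhs => rw [hspec]
    rw [Matrix.trace_mul_cycle, hUU', one_mul]
  set t : ℝ := d 0 + d 1 + d 2 with ht
  have hst : P.trace = (t : ℂ) := by
    rw [htrD, hDdef, trace_diagonal, Fin.sum_univ_three]; norm_cast
  have htpos : 0 < t := by
    have := htr; rw [hst] at this; simpa using this
  -- D * D = trace • D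
  have hDD : D * D = (t : ℂ) • D := by
    have e1 : star U * (P * P) * U = D * D := by
      rw [← hDiag]
      simp only [mul_assoc, hcancel]
    rw [← e1, h2, hst]
    simp only [Matrix.smul_mul, Matrix.mul_smul]
    rw [hDiag]
  -- eigenvalue equations
  have heig : ∀ i : Fin 3, d i * d i = t * d i := by
    intro i
    have := congrFun (congrFun hDD i) i
    simp only [hDdef, diagonal_mul_diagonal, diagonal_apply_eq, Matrix.smul_apply, smul_eq_mul] at this
    exact_mod_cast this
  have hcases : ∀ i : Fin 3, d i = 0 ∨ d i = t := by
    intro i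
    rcases eq_or_ne (d i) 0 with h | h
    · exact Or.inl h
    · exact Or.inr (mul_right_cancel₀ h (heig i))
  obtain ⟨i₀, hi₀⟩ : ∃ i₀ : Fin 3, ∀ k, d k = if k = i₀ then t else 0 := by
    rcases hcases 0 with h0 | h0 <;> rcases hcases 1 with h1 | h1 <;>
      rcases hcases 2 with hc2 | hc2
    · exfalso; rw [h0, h1, hc2] at ht; linarith
    · exact ⟨2, by intro k; fin_cases k <;> simp [h0, h1, hc2]⟩
    · exact ⟨1, by intro k; fin_cases k <;> simp [h0, h1, hc2]⟩
    · exfalso; rw [h0, h1, hc2] at ht; linarith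
    · exact ⟨0, by intro k; fin_cases k <;> simp [h0, h1, hc2]⟩
    · exfalso; rw [h0, h1, hc2] at ht; linarith
    · exfalso; rw [h0, h1, hc2] at ht; linarith
    · exfalso; rw [h0, h1, hc2] at ht; linarith
  refine ⟨fun i => (Real.sqrt t : ℂ) * U i i₀, ?_⟩
  ext i j
  have hPij : P i j = ∑ k, U i k * (d k : ℂ) * star (U j k) := by
    rw [hspec, hDdef]
    simp [mul_apply, diagonal_apply, star_apply, ite_mul, zero_mul, mul_ite, mul_zero,
      Finset.sum_ite_eq, Finset.sum_ite_eq']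
  have hterm : ∀ k, U i k * (d k : ℂ) * star (U j k)
      = if k = i₀ then (t : ℂ) * (U i i₀ * star (U j i₀)) else 0 := by
    intro k
    rw [hi₀ k]
    by_cases h : k = i₀
    · subst h; simp only [if_pos rfl]; push_cast; ring
    · simp [h]
  have hsum : P i j = (t : ℂ) * (U i i₀ * star (U j i₀)) := by
    rw [hPij, Finset.sum_congr rfl (fun k _ => hterm k), Finset.sum_ite_eq']
    simp
  rw [hsum]
  have hsq : ((Real.sqrt t : ℝ) : ℂ) * ((Real.sqrt t : ℝ) : ℂ) = (t : ℂ) := by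
    norm_cast; exact Real.mul_self_sqrt htpos.le
  show _ = ((Real.sqrt t : ℂ) * U i i₀) * star ((Real.sqrt t : ℂ) * U j i₀)
  rw [star_mul', show star ((Real.sqrt t : ℂ)) = ((Real.sqrt t : ℝ) : ℂ) from by
    rw [Complex.star_def, Complex.conj_ofReal]]
  linear_combination -(U i i₀ * star (U j i₀)) * hsq

theorem freudenthal_square_zero_iff_rank_one :
    (∀ Ψ : Fin 3 → ℂ,
      freudenthal (Matrix.of fun i j => Ψ i * star (Ψ j))
        (Matrix.of fun i j => Ψ i * star (Ψ j)) = 0) ∧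
    (∀ P : Matrix (Fin 3) (Fin 3) ℂ, P.IsHermitian → P ≠ 0 → freudenthal P P = 0 →
      0 < P.trace.re → ∃ Ψ : Fin 3 → ℂ, P = Matrix.of fun i j => Ψ i * star (Ψ j)) := by
  constructor
  · intro Ψ
    have h : (Matrix.of fun i j => Ψ i * star (Ψ j)) * (Matrix.of fun i j => Ψ i * star (Ψ j))
        = (Matrix.of fun i j => Ψ i * star (Ψ j)).trace • (Matrix.of fun i j => Ψ i * star (Ψ j)) := by
      ext i j
      simp [mul_apply, trace, diag, Fin.sum_univ_three]
      ring
    rw [freudenthal, jmul_self, h, trace_smul, smul_eq_mul, sub_self, zero_smul, smul_zero,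
      sub_zero]
    module
  · intro P hA hP0 hF htr
    set s := P.trace with hs
    have hF' : P * P - s • P - (1/2 : ℂ) • (((P*P).trace - s * s) • (1 : Matrix (Fin 3) (Fin 3) ℂ)) = 0 := by
      rw [← jmul_self P]
      rw [freudenthal] at hF
      rw [← hF, jmul_self]; module
    have htrace : (P*P).trace = s * s := by
      have h0 := congrArg Matrix.trace hF'
      simp only [trace_sub, trace_smul, trace_one, trace_zero, smul_eq_mul, ← hs,
        Fintype.card_fin] at h0
      push_cast at h0
      linear_combination (-2 : ℂ) * h0
    have h2 : P * P = s • P := by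
      rw [htrace, sub_self, zero_smul, smul_zero, sub_zero, sub_eq_zero] at hF'
      exact hF'
    exact rank_one_of_sq P hA h2 htr
end
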